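/- Let f₀: X → Y be a bijective cellular map between k-dimensional CW complexes, and let φ: ∂D^{k+1} → X and φ': ∂D^{k+1} → Y be attaching maps such that f₀ ∘ φ is homotopic to φ'. Then f₀ extends to a bijective cellular map f: X ∪_φ D^{k+1} → Y ∪_{φ'} D^{k+1}. -/

import Mathlib

/-!
Formalization preamble.

CW structures, classifying spaces, (strong) inessentiality, smooth coverings, cellular and
bijective cellular maps, suspensions and wedges of spheres are defined concretely.  Notions
whose construction is beyond current Mathlib (real K-homology `KO` and its connective cover
`ko`, spin structures, the strong Novikov conjecture, singular (co)homology with (local)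
coefficients, scalar curvature) are axiomatized as explicit interfaces (structures) recording
their relevant formal properties, and the statements are phrased relative to such interfaces.
-/

noncomputable section

/-! ### CW structures -/

open Metric in
/-- A CW structure on a topological space `X`.  The `n`-cells are indexed by `cells n`;
each cell comes with a characteristic map, defined (for convenience) on the whole euclidean
space `ℝⁿ`, whose restriction to the closed unit ball is the usual characteristic map.
The axioms are: injectivity on the open ball, the open cells partition `X`, the boundary
sphere of each cell is attached to cells of lower dimension, closure finiteness, and the
weak topology condition. -/
structure CWStructure (X : Type) [TopologicalSpace X] : Type 1 where
  /-- the set of `n`-dimensional cells -/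
  cells : ℕ → Type
  /-- characteristic maps -/
  charMap : ∀ {n : ℕ}, cells n → C(EuclideanSpace ℝ (Fin n), X)
  injOn : ∀ (n : ℕ) (e : cells n),
    Set.InjOn (charMap e) (ball (0 : EuclideanSpace ℝ (Fin n)) 1)
  cover : ∀ x : X, ∃! p : Σ n, cells n,
    x ∈ charMap p.2 '' ball (0 : EuclideanSpace ℝ (Fin p.1)) 1
  sphere_mapsTo : ∀ (n : ℕ) (e : cells (n + 1)),
    Set.MapsTo (charMap e) (sphere (0 : EuclideanSpace ℝ (Fin (n + 1))) 1)
      (⋃ (m : ℕ) (_ : m ≤ n) (e' : cells m),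
        charMap e' '' closedBall (0 : EuclideanSpace ℝ (Fin m)) 1)
  closure_finite : ∀ (n : ℕ) (e : cells n),
    {p : Σ m, cells m | ((charMap p.2 '' ball (0 : EuclideanSpace ℝ (Fin p.1)) 1) ∩
      (charMap e '' closedBall (0 : EuclideanSpace ℝ (Fin n)) 1)).Nonempty}.Finite
  weak_topology : ∀ A : Set X,
    (∀ (n : ℕ) (e : cells n),
      IsClosed (charMap e ⁻¹' A ∩ closedBall (0 : EuclideanSpace ℝ (Fin n)) 1)) → IsClosed A

namespace CWStructure

variable {X : Type} [TopologicalSpace X]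

/-- The (closed) `n`-skeleton of a CW structure: the union of all closed cells of
dimension `≤ n`. -/
def skeleton (cw : CWStructure X) (n : ℕ) : Set X :=
  ⋃ (m : ℕ) (_ : m ≤ n) (e : cw.cells m),
    cw.charMap e '' Metric.closedBall (0 : EuclideanSpace ℝ (Fin m)) 1

/-- The open cell associated to a cell. -/
def openCell (cw : CWStructure X) {n : ℕ} (e : cw.cells n) : Set X :=
  cw.charMap e '' Metric.ball (0 : EuclideanSpace ℝ (Fin n)) 1

/-- The inclusion of the `n`-skeleton, as a continuous map. -/
def skelIncl (cw : CWStructure X) (n : ℕ) : C(↥(cw.skeleton n), X) :=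
  ⟨Subtype.val, continuous_subtype_val⟩

/-- The inclusion between skeleta, as a continuous map. -/
def skelInclLe (cw : CWStructure X) {m n : ℕ} (h : m ≤ n) :
    C(↥(cw.skeleton m), ↥(cw.skeleton n)) :=
  ⟨Set.inclusion (by
      intro x hx
      simp only [skeleton, Set.mem_iUnion] at hx ⊢
      obtain ⟨k, hk, e, he⟩ := hx
      exact ⟨k, hk.trans h, e, he⟩),
    continuous_inclusion _⟩

/-- A subset of `X` is a subcomplex if it is closed and is a union of (closed) cells. -/
def IsSubcomplex (cw : CWStructure X) (Y : Set X) : Prop :=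
  IsClosed Y ∧ ∃ s : ∀ n, Set (cw.cells n),
    Y = ⋃ (n : ℕ) (e : cw.cells n) (_ : e ∈ s n),
      cw.charMap e '' Metric.closedBall (0 : EuclideanSpace ℝ (Fin n)) 1

/-- A CW structure is a *wedge of spheres with its minimal CW structure* if it has exactly one
`0`-cell and the attaching map of every cell of positive dimension is the constant map to this
`0`-cell. -/
def IsWedgeOfSpheres (cw : CWStructure X) : Prop :=
  (∃ e₀ : cw.cells 0, ∀ e : cw.cells 0, e = e₀) ∧
    ∀ (n : ℕ) (e : cw.cells (n + 1)),
      ∀ z ∈ Metric.sphere (0 : EuclideanSpace ℝ (Fin (n + 1))) 1,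
        cw.charMap e z ∈ cw.skeleton 0 ∧
        ∀ z' ∈ Metric.sphere (0 : EuclideanSpace ℝ (Fin (n + 1))) 1,
          cw.charMap e z = cw.charMap e z'

end CWStructure

/-- A bundled CW complex: a topological space with a CW structure and a base point. -/
structure CWSpace : Type 1 where
  /-- the underlying space -/
  carrier : Type
  [topInst : TopologicalSpace carrier]
  /-- the CW structure -/
  cw : CWStructure carrier
  /-- a base point -/
  pt : carrier

attribute [instance] CWSpace.topInst
/-! ### Induced maps on homotopy groups, classifying spaces, (strong) inessentiality -/

open scoped Topology.Homotopy

section HomotopyGroups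

variable {X Y : Type} [TopologicalSpace X] [TopologicalSpace Y]

/-- Push a generalized loop forward along a continuous map. -/
def GenLoop.push (g : C(X, Y)) {N : Type} {x : X} (p : GenLoop N X x) :
    GenLoop N Y (g x) :=
  ⟨g.comp p.1, fun y hy => by
    show g (p.1 y) = g x
    rw [p.2 y hy]⟩

/-- The induced map on homotopy groups (as a map of sets; for `N = Fin 1` this is the
usual induced homomorphism on fundamental groups). -/
def hgMap (g : C(X, Y)) (x : X) (N : Type) :
    HomotopyGroup N X x → HomotopyGroup N Y (g x) :=
  Quotient.map (GenLoop.push g) (fun _ _ h => h.map (fun H => H.compContinuousMap g))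

/-- `f` induces an isomorphism on fundamental groups based at `x`; for maps to aspherical
spaces this says exactly that `f` is a classifying map of the universal covering. -/
def IsPi1Iso (f : C(X, Y)) (x : X) : Prop :=
  Function.Bijective (hgMap f x (Fin 1))

/-- A map `f : X → Y` is a `k`-equivalence if it induces isomorphisms on homotopy groups
`π_i` for `i < k` and an epimorphism on `π_k`, at every base point. -/
def IsKEquivalence (k : ℕ) (f : C(X, Y)) : Prop :=
  ∀ x : X, (∀ i : ℕ, i < k → Function.Bijective (hgMap f x (Fin i))) ∧
    Function.Surjective (hgMap f x (Fin k))

end HomotopyGroups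

/-- A space is aspherical if all its higher homotopy groups vanish. -/
def IsAspherical (B : Type) [TopologicalSpace B] : Prop :=
  ∀ n : ℕ, 2 ≤ n → ∀ b : B, Subsingleton (HomotopyGroup (Fin n) B b)

/-- A bundled CW complex `B` is a classifying space (an Eilenberg–MacLane space `K(Γ,1)`)
for the group `Γ`. -/
structure IsClassifyingCW (Γ : Type) [Group Γ] (B : CWSpace) : Prop where
  pathConnected : PathConnectedSpace B.carrier
  aspherical : IsAspherical B.carrier
  pi1 : Nonempty (FundamentalGroup B.carrier B.pt ≃* Γ)

/-- The map `u` can be deformed (within its homotopy class) into the `k`-skeleton of `B`. -/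
def DeformsIntoSkeleton {M : Type} [TopologicalSpace M] (B : CWSpace)
    (u : C(M, B.carrier)) (k : ℕ) : Prop :=
  ∃ v : C(M, B.carrier), u.Homotopic v ∧ Set.range v ⊆ B.cw.skeleton k

/-- A closed `n`-manifold (or, more generally, a space) `M` is *inessential* if a classifying
map `u : M → BΓ` of its universal covering (i.e. a map to an aspherical CW complex inducing an
isomorphism of fundamental groups) can be deformed into the `(n-1)`-skeleton `BΓ^{(n-1)}`. -/
def Inessential (n : ℕ) (M : Type) [TopologicalSpace M] : Prop :=
  ∃ (B : CWSpace) (u : C(M, B.carrier)) (x : M),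
    PathConnectedSpace B.carrier ∧ IsAspherical B.carrier ∧ IsPi1Iso u x ∧
      DeformsIntoSkeleton B u (n - 1)

/-- `M` is *strongly inessential* if a classifying map of its universal covering can be
deformed into the `(n-2)`-skeleton `BΓ^{(n-2)}`. -/
def StronglyInessential (n : ℕ) (M : Type) [TopologicalSpace M] : Prop :=
  ∃ (B : CWSpace) (u : C(M, B.carrier)) (x : M),
    PathConnectedSpace B.carrier ∧ IsAspherical B.carrier ∧ IsPi1Iso u x ∧
      DeformsIntoSkeleton B u (n - 2)
/-! ### Manifold notions: smooth coverings, orientability, positive scalar curvature -/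

open scoped Manifold

/-- A (connected) smooth covering of the `n`-manifold `M`: a smooth covering map
`proj : total → M` from a connected smooth `n`-manifold. -/
structure SmoothCovering (n : ℕ) (M : Type) [TopologicalSpace M]
    [ChartedSpace (EuclideanSpace ℝ (Fin n)) M] : Type 1 where
  /-- the total space of the covering -/
  total : Type
  [topTotal : TopologicalSpace total]
  [t2Total : T2Space total]
  [chartedTotal : ChartedSpace (EuclideanSpace ℝ (Fin n)) total]
  [smoothTotal : IsManifold (𝓡 n) ((⊤ : ℕ∞) : WithTop ℕ∞) total]
  [connectedTotal : ConnectedSpace total]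
  /-- the covering projection -/
  proj : C(total, M)
  covering : IsCoveringMap proj
  smooth : ContMDiff (𝓡 n) (𝓡 n) (⊤ : ℕ∞) proj

attribute [instance] SmoothCovering.topTotal SmoothCovering.t2Total
  SmoothCovering.chartedTotal SmoothCovering.smoothTotal SmoothCovering.connectedTotal

/-- A covering is finite if all its fibers are finite. -/
def SmoothCovering.IsFinite {n : ℕ} {M : Type} [TopologicalSpace M]
    [ChartedSpace (EuclideanSpace ℝ (Fin n)) M] (c : SmoothCovering n M) : Prop :=
  ∀ x : M, (c.proj ⁻¹' {x}).Finite

/-- A smooth manifold is orientable if it admits an atlas (compatible with its smooth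
structure) all of whose transition maps have positive Jacobian determinant. -/
def OrientableManifold (n : ℕ) (M : Type) [TopologicalSpace M]
    [ChartedSpace (EuclideanSpace ℝ (Fin n)) M] [IsManifold (𝓡 n) ((⊤ : ℕ∞) : WithTop ℕ∞) M] : Prop :=
  ∃ A : Set (OpenPartialHomeomorph M (EuclideanSpace ℝ (Fin n))),
    (∀ e ∈ A, e ∈ StructureGroupoid.maximalAtlas M (contDiffGroupoid ((⊤ : ℕ∞) : WithTop ℕ∞) (𝓡 n))) ∧
    (⋃ e ∈ A, e.source) = Set.univ ∧
    ∀ e ∈ A, ∀ e' ∈ A, ∀ x ∈ (e.symm.trans e').source,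
      0 < (fderiv ℝ (e'.toFun ∘ e.symm.toFun) x).det

/-- A Riemannian metric on `M` together with its scalar curvature function.
The metric is a positive-definite symmetric bilinear form on each tangent space and `scal` is
a continuous function recording its scalar curvature.  (The pointwise relation expressing
`scal` in terms of the second derivatives of the metric via the Levi-Civita connection is
beyond the differential geometry currently available in Mathlib and is elided here.) -/
structure RiemannianMetricWithScalarCurvature (n : ℕ) (M : Type) [TopologicalSpace M]
    [ChartedSpace (EuclideanSpace ℝ (Fin n)) M] [IsManifold (𝓡 n) ((⊤ : ℕ∞) : WithTop ℕ∞) M] :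
    Type where
  /-- the metric tensor -/
  metric : ∀ x : M, TangentSpace (𝓡 n) x →ₗ[ℝ] TangentSpace (𝓡 n) x →ₗ[ℝ] ℝ
  symm : ∀ (x : M) (v w : TangentSpace (𝓡 n) x), metric x v w = metric x w v
  posdef : ∀ (x : M) (v : TangentSpace (𝓡 n) x), v ≠ 0 → 0 < metric x v v
  /-- the scalar curvature function of the metric -/
  scal : M → ℝ
  scal_continuous : Continuous scal

/-- `M` carries a (complete) Riemannian metric of positive scalar curvature. -/
def HasPSCMetric (n : ℕ) (M : Type) [TopologicalSpace M]
    [ChartedSpace (EuclideanSpace ℝ (Fin n)) M] [IsManifold (𝓡 n) ((⊤ : ℕ∞) : WithTop ℕ∞) M] : Prop :=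
  ∃ g : RiemannianMetricWithScalarCurvature n M, ∀ x : M, 0 < g.scal x
/-! ### Collapsing a subspace to a point -/

/-- The setoid identifying all points of `A ⊆ X` with each other. -/
def collapseSetoid (X : Type) (A : Set X) : Setoid X where
  r a b := a = b ∨ (a ∈ A ∧ b ∈ A)
  iseqv := by
    refine ⟨fun _ => Or.inl rfl, ?_, ?_⟩
    · rintro a b (rfl | h)
      · exact Or.inl rfl
      · exact Or.inr ⟨h.2, h.1⟩
    · rintro a b c (rfl | hab) hbc
      · exact hbc
      · rcases hbc with rfl | hbc
        · exact Or.inr hab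
        · exact Or.inr ⟨hab.1, hbc.2⟩

/-- The quotient space `X/A` obtained by collapsing the subspace `A` to a point. -/
def Collapse (X : Type) [TopologicalSpace X] (A : Set X) : Type :=
  Quotient (collapseSetoid X A)

instance (X : Type) [TopologicalSpace X] (A : Set X) : TopologicalSpace (Collapse X A) :=
  instTopologicalSpaceQuotient

/-- The quotient map `X → X/A`. -/
def Collapse.mkC (X : Type) [TopologicalSpace X] (A : Set X) : C(X, Collapse X A) :=
  ⟨Quotient.mk _, continuous_quotient_mk'⟩

/-- The point of `X/A` corresponding to the collapsed subspace (image of `a ∈ A`). -/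
def Collapse.basePt {X : Type} [TopologicalSpace X] {A : Set X} (a : X) : Collapse X A :=
  Collapse.mkC X A a

/-- A map of pairs `f : (X, A) → (Y, B)` descends to a continuous map `X/A → Y/B`. -/
def Collapse.desc {X Y : Type} [TopologicalSpace X] [TopologicalSpace Y]
    {A : Set X} {B : Set Y} (f : C(X, Y)) (h : Set.MapsTo f A B) :
    C(Collapse X A, Collapse Y B) :=
  ⟨Quotient.lift (fun x => Quotient.mk _ (f x)) (by
      rintro a b (rfl | hab)
      · rfl
      · exact Quotient.sound (Or.inr ⟨h hab.1, h hab.2⟩)),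
    Continuous.quotient_lift (by
      exact Continuous.comp continuous_quotient_mk' f.continuous) _⟩
/-! ### An interface for real K-homology `KO`, its connective cover `ko`,
spin manifolds and the strong Novikov conjecture -/

open scoped Manifold

instance : (Ideal.span {(2 : ℤ)}).IsPrime :=
  (Ideal.span_singleton_prime (by norm_num)).mpr Int.prime_two

/-- The integers localized at the prime `2`, `ℤ_(2)`. -/
abbrev ZLocTwo : Type := Localization.AtPrime (Ideal.span {(2 : ℤ)})

/-- Tensoring a homomorphism of abelian groups with `ℤ_(2)` over `ℤ`. -/
noncomputable def tensorZLocTwo {A B : Type} [AddCommGroup A] [AddCommGroup B]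
    (f : A →+ B) :
    TensorProduct ℤ A ZLocTwo →ₗ[ℤ] TensorProduct ℤ B ZLocTwo :=
  LinearMap.rTensor ZLocTwo f.toIntLinearMap

/-- The coefficient groups of real K-theory (Bott periodicity pattern). -/
def KOCoeffType (k : ℤ) : Type :=
  if k % 8 = 0 ∨ k % 8 = 4 then ℤ else if k % 8 = 1 ∨ k % 8 = 2 then ZMod 2 else PUnit

instance (k : ℤ) : AddCommGroup (KOCoeffType k) := by
  unfold KOCoeffType
  split
  · infer_instance
  · split <;> infer_instance

/-- An interface bundling real K-homology `KO₊`, its connective cover `ko₊`, the class of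
spin manifolds, the `ko`- and `KO`-fundamental classes of closed spin manifolds, and the
Strong Novikov conjecture.  The fields record the formal properties of these objects used in
the statements below (functoriality, homotopy invariance, exactness for collapsing a
subcomplex, the coefficient groups of `KO`, the comparison morphism `per : ko → KO`);
the analytical construction of real K-theory itself is beyond current Mathlib. -/
structure RealKTheory : Type 1 where
  /-- the real K-homology groups `KO_k(X)` -/
  grp : ℤ → (X : Type) → [TopologicalSpace X] → AddCommGrpCat.{0}
  /-- the induced homomorphism of a continuous map -/
  map : ∀ (k : ℤ) {X Y : Type} [TopologicalSpace X] [TopologicalSpace Y],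
    C(X, Y) → (grp k X ⟶ grp k Y)
  map_id : ∀ (k : ℤ) (X : Type) [TopologicalSpace X] (a : grp k X),
    map k (ContinuousMap.id X) a = a
  map_comp : ∀ (k : ℤ) {X Y Z : Type} [TopologicalSpace X] [TopologicalSpace Y]
    [TopologicalSpace Z] (f : C(X, Y)) (g : C(Y, Z)) (a : grp k X),
    map k (g.comp f) a = map k g (map k f a)
  homotopy_invariant : ∀ (k : ℤ) {X Y : Type} [TopologicalSpace X] [TopologicalSpace Y]
    (f g : C(X, Y)), f.Homotopic g → ∀ a : grp k X, map k f a = map k g a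
  /-- exactness for collapsing a closed nonempty subspace: the kernel of
  `KO_k(X) → KO_k(X/A)` consists of the images of the reduced classes on `A` -/
  exact_collapse : ∀ (k : ℤ) (X : Type) [TopologicalSpace X] (A : Set X),
    IsClosed A → A.Nonempty → ∀ u : grp k X,
      (map k (Collapse.mkC X A) u = 0 ↔
        ∃ v : grp k ↥A,
          map k (ContinuousMap.const (↥A) PUnit.unit) v = 0 ∧
          map k (⟨Subtype.val, continuous_subtype_val⟩ : C(↥A, X)) v = u)
  /-- the coefficients of `KO` -/
  coeff : ∀ k : ℤ, Nonempty ((grp k PUnit : Type) ≃+ KOCoeffType k)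
  /-- the connective real K-homology groups `ko_k(X)` -/
  kogrp : ℤ → (X : Type) → [TopologicalSpace X] → AddCommGrpCat.{0}
  /-- the induced homomorphism of a continuous map, in `ko` -/
  komap : ∀ (k : ℤ) {X Y : Type} [TopologicalSpace X] [TopologicalSpace Y],
    C(X, Y) → (kogrp k X ⟶ kogrp k Y)
  komap_id : ∀ (k : ℤ) (X : Type) [TopologicalSpace X] (a : kogrp k X),
    komap k (ContinuousMap.id X) a = a
  komap_comp : ∀ (k : ℤ) {X Y Z : Type} [TopologicalSpace X] [TopologicalSpace Y]
    [TopologicalSpace Z] (f : C(X, Y)) (g : C(Y, Z)) (a : kogrp k X),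
    komap k (g.comp f) a = komap k g (komap k f a)
  kohomotopy_invariant : ∀ (k : ℤ) {X Y : Type} [TopologicalSpace X] [TopologicalSpace Y]
    (f g : C(X, Y)), f.Homotopic g → ∀ a : kogrp k X, komap k f a = komap k g a
  /-- the periodization morphism `per : ko → KO` -/
  per : ∀ (k : ℤ) (X : Type) [TopologicalSpace X], kogrp k X ⟶ grp k X
  per_natural : ∀ (k : ℤ) {X Y : Type} [TopologicalSpace X] [TopologicalSpace Y]
    (f : C(X, Y)) (a : kogrp k X), per k Y (komap k f a) = map k f (per k X a)
  /-- `ko` is the connective cover of `KO`: `per` is an isomorphism on the coefficients in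
  non-negative degrees, and `ko` has vanishing coefficients in negative degrees. -/
  per_connective : ∀ k : ℤ, 0 ≤ k → Function.Bijective (per k PUnit)
  ko_connective : ∀ k : ℤ, k < 0 → Subsingleton (kogrp k PUnit : Type)
  /-- the predicate `M is a spin manifold` (orientability in real K-theory, equivalently
  `M` is orientable with `w₂(TM) = 0`) -/
  IsSpin : (n : ℕ) → (M : Type) → [TopologicalSpace M] →
    [ChartedSpace (EuclideanSpace ℝ (Fin n)) M] → [IsManifold (𝓡 n) ((⊤ : ℕ∞) : WithTop ℕ∞) M] → Prop
  /-- the `ko`-fundamental class `[M]_{ko}` of a closed spin `n`-manifold -/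
  koFundClass : ∀ (n : ℕ) (M : Type) [TopologicalSpace M] [T2Space M]
    [ChartedSpace (EuclideanSpace ℝ (Fin n)) M] [IsManifold (𝓡 n) ((⊤ : ℕ∞) : WithTop ℕ∞) M]
    [CompactSpace M], IsSpin n M → kogrp (n : ℤ) M
  /-- the `KO`-fundamental class `[M]_{KO}` of a closed spin `n`-manifold -/
  KOFundClass : ∀ (n : ℕ) (M : Type) [TopologicalSpace M] [T2Space M]
    [ChartedSpace (EuclideanSpace ℝ (Fin n)) M] [IsManifold (𝓡 n) ((⊤ : ℕ∞) : WithTop ℕ∞) M]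
    [CompactSpace M], IsSpin n M → grp (n : ℤ) M
  per_fundClass : ∀ (n : ℕ) (M : Type) [TopologicalSpace M] [T2Space M]
    [ChartedSpace (EuclideanSpace ℝ (Fin n)) M] [IsManifold (𝓡 n) ((⊤ : ℕ∞) : WithTop ℕ∞) M]
    [CompactSpace M] (h : IsSpin n M),
    per (n : ℤ) M (koFundClass n M h) = KOFundClass n M h
  /-- the Strong Novikov conjecture for a discrete group `Γ`: the analytic assembly map
  `KO_*(BΓ) → KO_*(C*_r Γ)` is injective (the reduced group `C*`-algebra and its K-theory are
  not available in Mathlib, so this is recorded as a predicate). -/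
  StrongNovikov : (Γ : Type) → [Group Γ] → Prop
/-! ### The K-theory injectivity conditions `(*)`, `(I)`, `(Ī)`, `(Ī₍₂₎)` -/

namespace CWStructure

variable {X : Type} [TopologicalSpace X]

/-- The `m`-skeleton viewed as a subset of the `n`-skeleton. -/
def relSkel (cw : CWStructure X) (n m : ℕ) : Set ↥(cw.skeleton n) :=
  {x | (x : X) ∈ cw.skeleton m}

/-- The quotient complex `X^{(n)}/X^{(m)}`. -/
def skelQuot (cw : CWStructure X) (n m : ℕ) : Type :=
  Collapse ↥(cw.skeleton n) (cw.relSkel n m)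

instance (cw : CWStructure X) (n m : ℕ) : TopologicalSpace (cw.skelQuot n m) :=
  instTopologicalSpaceQuotient

/-- The map `X^{(n)}/X^{(m)} → X/X^{(m)}` induced by the inclusion of the `n`-skeleton. -/
def quotToFull (cw : CWStructure X) (n m : ℕ) :
    C(cw.skelQuot n m, Collapse X (cw.skeleton m)) :=
  Collapse.desc (cw.skelIncl n) (fun _ hx => hx)

/-- The composite `X^{(l)} → X^{(n)} → X^{(n)}/X^{(m)}` for `l ≤ n`. -/
def skelToQuot (cw : CWStructure X) {l n : ℕ} (m : ℕ) (h : l ≤ n) :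
    C(↥(cw.skeleton l), cw.skelQuot n m) :=
  (Collapse.mkC _ _).comp (cw.skelInclLe h)

end CWStructure

namespace RealKTheory

variable (K : RealKTheory)

/-- Condition `(*)` for a CW complex `B`: the inclusion-induced homomorphism
`KO_*(B^{(n)}) → KO_*(B)` is injective for all `n > 4`. -/
def CondStarOn {B : Type} [TopologicalSpace B] (cw : CWStructure B) : Prop :=
  ∀ n : ℕ, 4 < n → ∀ k : ℤ, Function.Injective (K.map k (cw.skelIncl n))

/-- Condition `(*)` for a group `Γ`: there is a classifying CW complex `BΓ` such that the
inclusion-induced homomorphism `KO_*(BΓ^{(n)}) → KO_*(BΓ)` is injective for all `n > 4`. -/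
def CondStar (Γ : Type) [Group Γ] : Prop :=
  ∃ B : CWSpace, IsClassifyingCW Γ B ∧ K.CondStarOn B.cw

/-- Condition `(I)` for a CW complex `B`: the inclusion-induced homomorphism
`KO_*(B^{(n)}) → KO_*(B)`, restricted to the image of `KO_*(B^{(n-1)})`, is injective for
all `n > 4`. -/
def CondIOn {B : Type} [TopologicalSpace B] (cw : CWStructure B) : Prop :=
  ∀ n : ℕ, 4 < n → ∀ k : ℤ,
    Set.InjOn (K.map k (cw.skelIncl n))
      (Set.range (K.map k (cw.skelInclLe (Nat.sub_le n 1))))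

/-- Condition `(I)` for a group `Γ`. -/
def CondI (Γ : Type) [Group Γ] : Prop :=
  ∃ B : CWSpace, IsClassifyingCW Γ B ∧ K.CondIOn B.cw

/-- Condition `(Ī)` for a CW complex `B`: the inclusion-induced homomorphism
`KO_*(B^{(n)}/B^{(n-2)}) → KO_*(B/B^{(n-2)})`, restricted to the image of
`KO_*(B^{(n-1)})`, is injective for all `n > 4`. -/
def CondIbarOn {B : Type} [TopologicalSpace B] (cw : CWStructure B) : Prop :=
  ∀ n : ℕ, 4 < n → ∀ k : ℤ,
    Set.InjOn (K.map k (cw.quotToFull n (n - 2)))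
      (Set.range (K.map k (cw.skelToQuot (n - 2) (Nat.sub_le n 1))))

/-- Condition `(Ī)` for a group `Γ`. -/
def CondIbar (Γ : Type) [Group Γ] : Prop :=
  ∃ B : CWSpace, IsClassifyingCW Γ B ∧ K.CondIbarOn B.cw

/-- Condition `(Ī₍₂₎)` for a CW complex `B`: the homomorphism
`KO_*(B^{(n)}/B^{(n-2)}) ⊗ ℤ_(2) → KO_*(B/B^{(n-2)}) ⊗ ℤ_(2)` induced by the inclusion,
restricted to the image of `KO_*(B^{(n-1)}) ⊗ ℤ_(2)`, is injective for all `n > 4`. -/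
def CondIbar2On {B : Type} [TopologicalSpace B] (cw : CWStructure B) : Prop :=
  ∀ n : ℕ, 4 < n → ∀ k : ℤ,
    Set.InjOn (tensorZLocTwo (K.map k (cw.quotToFull n (n - 2))).hom)
      (Set.range (tensorZLocTwo (K.map k (cw.skelToQuot (n - 2) (Nat.sub_le n 1))).hom))

/-- Condition `(Ī₍₂₎)` for a group `Γ`. -/
def CondIbar2 (Γ : Type) [Group Γ] : Prop :=
  ∃ B : CWSpace, IsClassifyingCW Γ B ∧ K.CondIbar2On B.cw

end RealKTheory
/-! ### Spin, almost spin and totally non-spin manifolds -/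

open scoped Manifold

/-- An interface for the class of spin manifolds.  (`M` is spin iff `M` is orientable and the
second Stiefel–Whitney class `w₂(TM)` vanishes, equivalently iff `M` is `ko`-orientable;
characteristic classes are not yet available in Mathlib, so the class is recorded as a
predicate.) -/
structure SpinGeometry : Type 1 where
  /-- the predicate `M is a spin n-manifold` -/
  IsSpin : (n : ℕ) → (M : Type) → [TopologicalSpace M] →
    [ChartedSpace (EuclideanSpace ℝ (Fin n)) M] → [IsManifold (𝓡 n) ((⊤ : ℕ∞) : WithTop ℕ∞) M] → Prop

/-- `M` is almost spin: its universal covering (i.e. any simply connected covering manifold)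
is spin. -/
def AlmostSpin (SG : SpinGeometry) (n : ℕ) (M : Type) [TopologicalSpace M]
    [ChartedSpace (EuclideanSpace ℝ (Fin n)) M] : Prop :=
  ∀ c : SmoothCovering n M, SimplyConnectedSpace c.total → SG.IsSpin n c.total

/-- `M` is totally non-spin: its universal covering (i.e. any simply connected covering
manifold) is non-spin. -/
def TotallyNonSpin (SG : SpinGeometry) (n : ℕ) (M : Type) [TopologicalSpace M]
    [ChartedSpace (EuclideanSpace ℝ (Fin n)) M] : Prop :=
  ∀ c : SmoothCovering n M, SimplyConnectedSpace c.total → ¬ SG.IsSpin n c.total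
/-! ### An interface for singular cohomology with `ℤ/2`-coefficients, and `p`-tameness -/

/-- An interface for singular cohomology `H^*(-; ℤ/2)` with `ℤ/2`-coefficients:
a homotopy-invariant contravariant functor.  (The remaining Eilenberg–Steenrod axioms are
elided.) -/
structure CohomologyModTwo : Type 1 where
  /-- the cohomology groups `H^k(X; ℤ/2)` -/
  grp : ℕ → (X : Type) → [TopologicalSpace X] → AddCommGrpCat.{0}
  /-- the induced homomorphism of a continuous map -/
  map : ∀ (k : ℕ) {X Y : Type} [TopologicalSpace X] [TopologicalSpace Y],
    C(X, Y) → (grp k Y ⟶ grp k X)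
  map_id : ∀ (k : ℕ) (X : Type) [TopologicalSpace X] (a : grp k X),
    map k (ContinuousMap.id X) a = a
  map_comp : ∀ (k : ℕ) {X Y Z : Type} [TopologicalSpace X] [TopologicalSpace Y]
    [TopologicalSpace Z] (f : C(X, Y)) (g : C(Y, Z)) (a : grp k Z),
    map k (g.comp f) a = map k f (map k g a)
  homotopy_invariant : ∀ (k : ℕ) {X Y : Type} [TopologicalSpace X] [TopologicalSpace Y]
    (f g : C(X, Y)), f.Homotopic g → ∀ a : grp k Y, map k f a = map k g a

/-- A discrete group `G` is `2`-tame if there is a finite covering `β : B' → BG` of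
classifying spaces inducing the zero homomorphism `H²(BG; ℤ/2) → H²(B'; ℤ/2)`. -/
def IsTwoTame (Hc : CohomologyModTwo) (G : Type) [Group G] : Prop :=
  ∃ (BG : CWSpace) (B' : CWSpace) (β : C(B'.carrier, BG.carrier)),
    IsClassifyingCW G BG ∧ PathConnectedSpace B'.carrier ∧
    IsCoveringMap β ∧ (∀ y : BG.carrier, (β ⁻¹' {y}).Finite) ∧
    ∀ a : Hc.grp 2 BG.carrier, Hc.map 2 β a = 0
/-! ### An interface for relative singular homology with local coefficients -/

/-- An interface for relative singular homology `H_*(X, A; F)` with local coefficients in a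
`π₁(X, x)`-module `F`.  (The Eilenberg–Steenrod-type axioms characterizing it are elided.) -/
structure LocalCoefficientHomology : Type 1 where
  /-- the relative homology group `H_k(X, A; F)` with local coefficients in `F` -/
  grp : (k : ℕ) → (X : Type) → [TopologicalSpace X] → (A : Set X) → (x : X) →
    (F : Type) → [AddCommGroup F] → [DistribMulAction (FundamentalGroup X x) F] → Type
  ab : ∀ (k : ℕ) (X : Type) [TopologicalSpace X] (A : Set X) (x : X)
    (F : Type) [AddCommGroup F] [DistribMulAction (FundamentalGroup X x) F],
    AddCommGroup (grp k X A x F)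
/-! ### Finitely presented groups and type `FP₃` -/

/-- A group is finitely presented if it is isomorphic to the quotient of a finitely generated
free group by the normal closure of finitely many relators. -/
def GroupFinitelyPresented (Γ : Type) [Group Γ] : Prop :=
  ∃ (n : ℕ) (rels : Finset (FreeGroup (Fin n))),
    Nonempty (PresentedGroup (rels : Set (FreeGroup (Fin n))) ≃* Γ)

/-- A finitely presented group `Γ` is of type `FP₃` iff there is a classifying space `BΓ`
with finite `3`-skeleton; we use this characterization as the definition. -/
def TypeFP3 (Γ : Type) [Group Γ] : Prop :=
  GroupFinitelyPresented Γ ∧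
    ∃ B : CWSpace, IsClassifyingCW Γ B ∧ ∀ k : ℕ, k ≤ 3 → Finite (B.cw.cells k)
/-! ### Pointed spaces, reduced suspension, pairs, wedges of spheres -/

/-- A pointed topological space. -/
structure PtdSpace : Type 1 where
  /-- the underlying space -/
  carrier : Type
  [topInst : TopologicalSpace carrier]
  /-- the base point -/
  pt : carrier

attribute [instance] PtdSpace.topInst

/-- The subset of `X × I` collapsed when forming the reduced suspension. -/
def suspCollapsed {X : Type} (x₀ : X) : Set (X × unitInterval) :=
  {p | p.2 = 0 ∨ p.2 = 1 ∨ p.1 = x₀}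

/-- The setoid defining the reduced suspension `ΣX = (X × I)/(X×0 ∪ X×1 ∪ x₀×I)`. -/
def suspSetoid {X : Type} (x₀ : X) : Setoid (X × unitInterval) where
  r a b := a = b ∨ (a ∈ suspCollapsed x₀ ∧ b ∈ suspCollapsed x₀)
  iseqv := by
    refine ⟨fun _ => Or.inl rfl, ?_, ?_⟩
    · rintro a b (rfl | h)
      · exact Or.inl rfl
      · exact Or.inr ⟨h.2, h.1⟩
    · rintro a b c (rfl | hab) hbc
      · exact hbc
      · rcases hbc with rfl | hbc
        · exact Or.inr hab
        · exact Or.inr ⟨hab.1, hbc.2⟩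

/-- The reduced suspension of a pointed space. -/
def PtdSpace.susp (X : PtdSpace) : PtdSpace where
  carrier := Quotient (suspSetoid X.pt)
  pt := Quotient.mk _ (X.pt, 0)

/-- The iterated reduced suspension `Σ^m X` of a pointed space. -/
def PtdSpace.iterSusp (X : PtdSpace) : ℕ → PtdSpace
  | 0 => X
  | m + 1 => (X.iterSusp m).susp

/-- A pointed pair of spaces `(X, A)` with base point in `A`. -/
structure PtdPair : Type 1 where
  /-- the underlying (ambient) space -/
  carrier : Type
  [topInst : TopologicalSpace carrier]
  /-- the base point -/
  pt : carrier
  /-- the subspace -/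
  sub : Set carrier
  pt_mem : pt ∈ sub

attribute [instance] PtdPair.topInst

/-- The reduced suspension of a pointed pair: `Σ(X, A) = (ΣX, ΣA)`. -/
def PtdPair.susp (P : PtdPair) : PtdPair where
  carrier := Quotient (suspSetoid P.pt)
  pt := Quotient.mk _ (P.pt, 0)
  sub := (fun p => Quotient.mk (suspSetoid P.pt) p) '' (P.sub ×ˢ (Set.univ : Set unitInterval))
  pt_mem := ⟨(P.pt, 0), ⟨P.pt_mem, trivial⟩, rfl⟩

/-- The iterated reduced suspension of a pointed pair. -/
def PtdPair.iterSusp (P : PtdPair) : ℕ → PtdPair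
  | 0 => P
  | m + 1 => (P.iterSusp m).susp

/-- A map of pairs `(X, A) → (Y, B)`. -/
structure PairMap (P Q : PtdPair) : Type where
  /-- the underlying continuous map -/
  toFun : C(P.carrier, Q.carrier)
  mapsTo : Set.MapsTo toFun P.sub Q.sub

/-- The identity map of a pair. -/
def PairMap.id (P : PtdPair) : PairMap P P :=
  ⟨ContinuousMap.id _, fun _ hx => hx⟩

/-- Composition of maps of pairs. -/
def PairMap.comp {P Q R : PtdPair} (g : PairMap Q R) (f : PairMap P Q) : PairMap P R :=
  ⟨g.toFun.comp f.toFun, fun _ hx => g.mapsTo (f.mapsTo hx)⟩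

/-- Two maps of pairs are homotopic (as maps of pairs) if there is a homotopy between them
through maps sending the subspace into the subspace. -/
def PairHomotopic {P Q : PtdPair} (f g : PairMap P Q) : Prop :=
  ∃ H : ContinuousMap.Homotopy f.toFun g.toFun,
    ∀ (t : unitInterval) (x : P.carrier), x ∈ P.sub → H (t, x) ∈ Q.sub

/-- A homotopy equivalence of pairs `(X, A) ≃ (Y, B)`. -/
structure PairHomotopyEquiv (P Q : PtdPair) : Type where
  /-- the forward map -/
  toFun : PairMap P Q
  /-- the homotopy inverse -/
  invFun : PairMap Q P
  left : PairHomotopic (invFun.comp toFun) (PairMap.id P)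
  right : PairHomotopic (toFun.comp invFun) (PairMap.id Q)

/-- Two pairs are *stably homotopy equivalent* if they become homotopy equivalent (as pairs)
after applying a sufficiently high iterated reduced suspension. -/
def StablePairHomotopyEquiv (P Q : PtdPair) : Prop :=
  ∃ N : ℕ, Nonempty (PairHomotopyEquiv (P.iterSusp N) (Q.iterSusp N))

/-- The sphere `S^k`, realized as the unit sphere in `ℝ^{k+1}`. -/
def SphereCarrier (k : ℕ) : Type :=
  ↥(Metric.sphere (0 : EuclideanSpace ℝ (Fin (k + 1))) 1)

instance (k : ℕ) : TopologicalSpace (SphereCarrier k) :=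
  instTopologicalSpaceSubtype

/-- The base point of `S^k`. -/
def spherePt (k : ℕ) : SphereCarrier k :=
  ⟨EuclideanSpace.single (0 : Fin (k + 1)) 1, by
    simp [EuclideanSpace.norm_single]⟩

/-- The disjoint union underlying a wedge of spheres `⋁_{i ∈ ι} S^{d i}`,
with an extra point serving as the common base point. -/
def WedgePre (ι : Type) (d : ι → ℕ) : Type :=
  Unit ⊕ (Σ i : ι, SphereCarrier (d i))

instance (ι : Type) (d : ι → ℕ) : TopologicalSpace (WedgePre ι d) :=
  instTopologicalSpaceSum

/-- The points of `WedgePre` that get identified to the base point of the wedge. -/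
def wedgeBasePts (ι : Type) (d : ι → ℕ) : Set (WedgePre ι d) :=
  {a | a = Sum.inl () ∨ ∃ i : ι, a = Sum.inr ⟨i, spherePt (d i)⟩}

/-- The setoid defining the wedge of spheres. -/
def wedgeSetoid (ι : Type) (d : ι → ℕ) : Setoid (WedgePre ι d) where
  r a b := a = b ∨ (a ∈ wedgeBasePts ι d ∧ b ∈ wedgeBasePts ι d)
  iseqv := by
    refine ⟨fun _ => Or.inl rfl, ?_, ?_⟩
    · rintro a b (rfl | h)
      · exact Or.inl rfl
      · exact Or.inr ⟨h.2, h.1⟩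
    · rintro a b c (rfl | hab) hbc
      · exact hbc
      · rcases hbc with rfl | hbc
        · exact Or.inr hab
        · exact Or.inr ⟨hab.1, hbc.2⟩

/-- The wedge of spheres `⋁_{i ∈ ι} S^{d i}`. -/
def WedgeSpheres (ι : Type) (d : ι → ℕ) : Type :=
  Quotient (wedgeSetoid ι d)

instance (ι : Type) (d : ι → ℕ) : TopologicalSpace (WedgeSpheres ι d) :=
  instTopologicalSpaceQuotient

/-- The base point of a wedge of spheres. -/
def WedgeSpheres.pt (ι : Type) (d : ι → ℕ) : WedgeSpheres ι d :=
  Quotient.mk _ (Sum.inl ())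

/-- The subwedge of a wedge of spheres spanned by the spheres indexed by `J ⊆ ι`. -/
def WedgeSpheres.subWedge (ι : Type) (d : ι → ℕ) (J : Set ι) : Set (WedgeSpheres ι d) :=
  {x | x = WedgeSpheres.pt ι d ∨
    ∃ (i : ι) (_ : i ∈ J) (y : SphereCarrier (d i)), x = Quotient.mk _ (Sum.inr ⟨i, y⟩)}
/-! ### The torus and its skeleta -/

/-- The `m`-dimensional torus `T^m = (ℝ/ℤ)^m`. -/
abbrev Torus (m : ℕ) : Type := Fin m → AddCircle (1 : ℝ)

/-- The `n`-skeleton `T^m_n` of the torus in its standard CW structure (coming from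
`S¹ = e⁰ ∪ e¹`, with `0`-cell at `0`): the set of points with at most `n` coordinates
different from the base point. -/
def torusSkeleton (m n : ℕ) : Set (Torus m) :=
  {x | Set.ncard {i : Fin m | x i ≠ 0} ≤ n}

/-- The torus as a pointed space. -/
def ptdTorus (m : ℕ) : PtdSpace := ⟨Torus m, 0⟩

/-- The pair `(T^m_n, T^m_ℓ)` of skeleta of the torus, as a pointed pair. -/
def torusSkelPair (m n ℓ : ℕ) : PtdPair where
  carrier := ↥(torusSkeleton m n)
  pt := ⟨0, by
    have h : {i : Fin m | (0 : Torus m) i ≠ 0} = ∅ := by simp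
    simp [torusSkeleton, h]⟩
  sub := {x | (x : Torus m) ∈ torusSkeleton m ℓ}
  pt_mem := by
    have h : {i : Fin m | (0 : Torus m) i ≠ 0} = ∅ := by simp
    show (0 : Torus m) ∈ torusSkeleton m ℓ
    simp [torusSkeleton, h]
/-! ### Cellular and bijective cellular maps; attaching cells -/

section Cellular

variable {X Y : Type} [TopologicalSpace X] [TopologicalSpace Y]

/-- A continuous map between CW complexes is cellular if it maps skeleta to skeleta. -/
def IsCellular (cwX : CWStructure X) (cwY : CWStructure Y) (f : C(X, Y)) : Prop :=
  ∀ n : ℕ, Set.MapsTo f (cwX.skeleton n) (cwY.skeleton n)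

/-- A cellular map `f : X → Y` between CW complexes is *bijective cellular* if there is a
dimension-preserving bijection `β` between the cells of `X` and the cells of `Y` such that
for each cell `e` of `X` there is a closed ball `B` inside the (open) cell `e` such that the
restriction of `f` to the interior of `B` is a homeomorphism onto the open cell `β e`.
(In the chart of the cell `e`, `B` corresponds to a closed ball `closedBall c r` contained in
the open unit ball; by invariance of domain the bijectivity condition below is equivalent to
being a homeomorphism onto the open cell.) -/
structure BijectiveCellular (cwX : CWStructure X) (cwY : CWStructure Y) (f : C(X, Y)) :
    Type 1 where
  cellular : IsCellular cwX cwY f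
  /-- the dimension-preserving bijection between the cells -/
  β : ∀ n : ℕ, cwX.cells n ≃ cwY.cells n
  exists_ball : ∀ (n : ℕ) (e : cwX.cells n),
    ∃ (c : EuclideanSpace ℝ (Fin n)) (r : ℝ), 0 < r ∧
      Metric.closedBall c r ⊆ Metric.ball (0 : EuclideanSpace ℝ (Fin n)) 1 ∧
      Set.BijOn (f ∘ cwX.charMap e) (Metric.ball c r) (cwY.openCell (β n e))

end Cellular

section Attach

variable {X : Type} [TopologicalSpace X] {k : ℕ}

open scoped Classical in
/-- The map realizing the identifications defining the adjunction space `X ∪_φ D^{k+1}`: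
a boundary point `z` of the disc is sent to `φ z ∈ X`. -/
def attachRepr (φ : C(↥(Metric.sphere (0 : EuclideanSpace ℝ (Fin (k + 1))) 1), X)) :
    (X ⊕ ↥(Metric.closedBall (0 : EuclideanSpace ℝ (Fin (k + 1))) 1)) →
      (X ⊕ ↥(Metric.closedBall (0 : EuclideanSpace ℝ (Fin (k + 1))) 1))
  | Sum.inl x => Sum.inl x
  | Sum.inr z =>
      if h : (z : EuclideanSpace ℝ (Fin (k + 1))) ∈
          Metric.sphere (0 : EuclideanSpace ℝ (Fin (k + 1))) 1 then
        Sum.inl (φ ⟨z, h⟩)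
      else Sum.inr z

/-- The setoid defining the adjunction space `X ∪_φ D^{k+1}`. -/
def attachSetoid (φ : C(↥(Metric.sphere (0 : EuclideanSpace ℝ (Fin (k + 1))) 1), X)) :
    Setoid (X ⊕ ↥(Metric.closedBall (0 : EuclideanSpace ℝ (Fin (k + 1))) 1)) where
  r a b := attachRepr φ a = attachRepr φ b
  iseqv := ⟨fun _ => rfl, Eq.symm, Eq.trans⟩

/-- The adjunction space `X ∪_φ D^{k+1}` obtained by attaching a `(k+1)`-cell to `X`
along `φ : ∂D^{k+1} → X`. -/
def AttachCell (φ : C(↥(Metric.sphere (0 : EuclideanSpace ℝ (Fin (k + 1))) 1), X)) : Type :=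
  Quotient (attachSetoid φ)

instance (φ : C(↥(Metric.sphere (0 : EuclideanSpace ℝ (Fin (k + 1))) 1), X)) :
    TopologicalSpace (AttachCell φ) :=
  instTopologicalSpaceQuotient

/-- The canonical inclusion `X → X ∪_φ D^{k+1}`. -/
def AttachCell.inl (φ : C(↥(Metric.sphere (0 : EuclideanSpace ℝ (Fin (k + 1))) 1), X)) :
    C(X, AttachCell φ) :=
  ⟨fun x => Quotient.mk _ (Sum.inl x),
    Continuous.comp continuous_quotient_mk' continuous_inl⟩

/-- The canonical map `D^{k+1} → X ∪_φ D^{k+1}`. -/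
def AttachCell.disc (φ : C(↥(Metric.sphere (0 : EuclideanSpace ℝ (Fin (k + 1))) 1), X))
    (z : ↥(Metric.closedBall (0 : EuclideanSpace ℝ (Fin (k + 1))) 1)) : AttachCell φ :=
  Quotient.mk _ (Sum.inr z)

/-- `cwA` is *the* CW structure on the adjunction space `X ∪_φ D^{k+1}` induced by a CW
structure `cwX` on `X` (for a cellular attaching map `φ`): the cells of `X` are cells of
`X ∪_φ D^{k+1}` with the same characteristic maps, and there is exactly one new `(k+1)`-cell
whose characteristic map is the canonical map of the disc. -/
def IsAttachCWStructure (cwX : CWStructure X)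
    (φ : C(↥(Metric.sphere (0 : EuclideanSpace ℝ (Fin (k + 1))) 1), X))
    (cwA : CWStructure (AttachCell φ)) : Prop :=
  ∃ ι : ∀ n : ℕ, cwX.cells n → cwA.cells n,
    (∀ n, Function.Injective (ι n)) ∧
    (∀ (n : ℕ) (e : cwX.cells n) (z : EuclideanSpace ℝ (Fin n)),
      cwA.charMap (ι n e) z = AttachCell.inl φ (cwX.charMap e z)) ∧
    (∀ n : ℕ, n ≠ k + 1 → Function.Surjective (ι n)) ∧
    ∃ e₀ : cwA.cells (k + 1),
      (∀ e : cwX.cells (k + 1), ι (k + 1) e ≠ e₀) ∧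
      (∀ e' : cwA.cells (k + 1), e' = e₀ ∨ ∃ e, ι (k + 1) e = e') ∧
      ∀ (z : EuclideanSpace ℝ (Fin (k + 1)))
        (hz : z ∈ Metric.closedBall (0 : EuclideanSpace ℝ (Fin (k + 1))) 1),
        cwA.charMap e₀ z = AttachCell.disc φ ⟨z, hz⟩

end Attach
namespace BCEAux

open Metric

variable {k : ℕ} {X Y : Type} [TopologicalSpace X] [TopologicalSpace Y]

/-- clamp a vector into the closed unit ball -/
noncomputable def clamp (k : ℕ) (x : EuclideanSpace ℝ (Fin (k + 1))) :
    ↥(closedBall (0 : EuclideanSpace ℝ (Fin (k + 1))) 1) :=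
  ⟨(max 1 ‖x‖)⁻¹ • x, by
    have hpos : (0:ℝ) < max 1 ‖x‖ := lt_of_lt_of_le one_pos (le_max_left _ _)
    rw [Metric.mem_closedBall, dist_zero_right, norm_smul, norm_inv, Real.norm_eq_abs,
      abs_of_pos hpos, inv_mul_le_iff₀ hpos, mul_one]
    exact le_max_right _ _⟩

lemma clamp_continuous (k : ℕ) : Continuous (clamp k) := by
  apply Continuous.subtype_mk
  exact ((continuous_const.max continuous_norm).inv₀
    (fun x => ne_of_gt (lt_of_lt_of_le one_pos (le_max_left _ _)))).smul continuous_id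

lemma clamp_coe {x : EuclideanSpace ℝ (Fin (k + 1))} (h : ‖x‖ ≤ 1) :
    (clamp k x : EuclideanSpace ℝ (Fin (k + 1))) = x := by
  simp [clamp, max_eq_left h]

open scoped Classical in
/-- normalization onto the unit sphere (junk value at 0) -/
noncomputable def nrm (k : ℕ) (x : EuclideanSpace ℝ (Fin (k + 1))) :
    ↥(sphere (0 : EuclideanSpace ℝ (Fin (k + 1))) 1) :=
  if h : x = 0 then ⟨EuclideanSpace.single 0 1, by simp [EuclideanSpace.norm_single]⟩
  else ⟨‖x‖⁻¹ • x, by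
    rw [mem_sphere_zero_iff_norm, norm_smul, norm_inv, norm_norm,
      inv_mul_cancel₀ (norm_ne_zero_iff.mpr h)]⟩

lemma nrm_coe {x : EuclideanSpace ℝ (Fin (k + 1))} (h : x ≠ 0) :
    (nrm k x : EuclideanSpace ℝ (Fin (k + 1))) = ‖x‖⁻¹ • x := by
  simp [nrm, h]

lemma nrm_continuousOn (k : ℕ) :
    ContinuousOn (nrm k) {x : EuclideanSpace ℝ (Fin (k + 1)) | x ≠ 0} := by
  rw [Topology.IsEmbedding.subtypeVal.continuousOn_iff]
  have : ContinuousOn (fun x : EuclideanSpace ℝ (Fin (k + 1)) => ‖x‖⁻¹ • x)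
      {x : EuclideanSpace ℝ (Fin (k + 1)) | x ≠ 0} := by
    apply ContinuousOn.smul (f := fun x : EuclideanSpace ℝ (Fin (k + 1)) => ‖x‖⁻¹) (g := fun x => x) _ continuousOn_id
    exact (continuous_norm.continuousOn).inv₀ (fun x hx => norm_ne_zero_iff.mpr hx)
  exact this.congr (fun x hx => by simp [Function.comp, nrm_coe hx])

lemma nrm_of_norm_one {x : EuclideanSpace ℝ (Fin (k + 1))} (h : ‖x‖ = 1) :
    (nrm k x : EuclideanSpace ℝ (Fin (k + 1))) = x := by
  rw [nrm_coe (by intro h0; rw [h0] at h; simp at h), h, inv_one, one_smul]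

lemma nrm_sphere (z : ↥(sphere (0 : EuclideanSpace ℝ (Fin (k + 1))) 1)) :
    nrm k (z : EuclideanSpace ℝ (Fin (k + 1))) = z :=
  Subtype.ext (nrm_of_norm_one (mem_sphere_zero_iff_norm.mp z.2))

section attach

variable (φ' : C(↥(sphere (0 : EuclideanSpace ℝ (Fin (k + 1))) 1), X))

lemma inl_injective : Function.Injective (AttachCell.inl φ') := by
  intro a b h
  have h2 : attachRepr φ' (Sum.inl a) = attachRepr φ' (Sum.inl b) := Quotient.exact h
  simpa [attachRepr] using h2

lemma disc_continuous : Continuous (AttachCell.disc φ') :=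
  continuous_quotient_mk'.comp continuous_inr

lemma disc_sphere (w : ↥(closedBall (0 : EuclideanSpace ℝ (Fin (k + 1))) 1))
    (h : (w : EuclideanSpace ℝ (Fin (k + 1))) ∈ sphere (0 : EuclideanSpace ℝ (Fin (k + 1))) 1) :
    AttachCell.disc φ' w = AttachCell.inl φ' (φ' ⟨w, h⟩) := by
  apply Quotient.sound
  show attachRepr φ' (Sum.inr w) = attachRepr φ' (Sum.inl (φ' ⟨w, h⟩))
  simp only [attachRepr]
  rw [dif_pos h]

lemma disc_inj_off_sphere (w₁ w₂ : ↥(closedBall (0 : EuclideanSpace ℝ (Fin (k + 1))) 1))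
    (h₁ : (w₁ : EuclideanSpace ℝ (Fin (k + 1))) ∉ sphere (0 : EuclideanSpace ℝ (Fin (k + 1))) 1)
    (h₂ : (w₂ : EuclideanSpace ℝ (Fin (k + 1))) ∉ sphere (0 : EuclideanSpace ℝ (Fin (k + 1))) 1)
    (h : AttachCell.disc φ' w₁ = AttachCell.disc φ' w₂) : w₁ = w₂ := by
  have h2 : attachRepr φ' (Sum.inr w₁) = attachRepr φ' (Sum.inr w₂) := Quotient.exact h
  simp only [attachRepr] at h2
  rw [dif_neg h₁, dif_neg h₂] at h2
  exact Sum.inr.inj h2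

end attach

end BCEAux

namespace BCEAux

open Metric

variable {k : ℕ} {X : Type} [TopologicalSpace X]

lemma mem_skeleton (cw : CWStructure X) {n m : ℕ} (h : m ≤ n) (e : cw.cells m)
    {w : EuclideanSpace ℝ (Fin m)} (hw : w ∈ closedBall (0 : EuclideanSpace ℝ (Fin m)) 1) :
    cw.charMap e w ∈ cw.skeleton n := by
  simp only [CWStructure.skeleton, Set.mem_iUnion]
  exact ⟨m, h, e, w, hw, rfl⟩

lemma skeleton_mono (cw : CWStructure X) {m n : ℕ} (h : m ≤ n) :
    cw.skeleton m ⊆ cw.skeleton n := by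
  intro x hx
  simp only [CWStructure.skeleton, Set.mem_iUnion] at hx ⊢
  obtain ⟨p, hp, e, he⟩ := hx
  exact ⟨p, hp.trans h, e, he⟩

section gmap

variable (φ' ψ : C(↥(sphere (0 : EuclideanSpace ℝ (Fin (k + 1))) 1), X))
variable (H : ψ.Homotopy φ')

open scoped Classical in
/-- The extension of the map over the attached cell on the level of the disc. -/
noncomputable def gmap (z : ↥(closedBall (0 : EuclideanSpace ℝ (Fin (k + 1))) 1)) :
    AttachCell φ' :=
  Set.piecewise
    {z : ↥(closedBall (0 : EuclideanSpace ℝ (Fin (k + 1))) 1) |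
      ‖(z : EuclideanSpace ℝ (Fin (k + 1)))‖ ≤ 1 / 2}
    (fun z => AttachCell.disc φ' (clamp k ((2 : ℝ) • (z : EuclideanSpace ℝ (Fin (k + 1))))))
    (fun z => AttachCell.inl φ'
      (H (Set.projIcc (0 : ℝ) 1 zero_le_one
            (2 - 2 * ‖(z : EuclideanSpace ℝ (Fin (k + 1)))‖),
          nrm k (z : EuclideanSpace ℝ (Fin (k + 1)))))) z

lemma gmap_of_le {z : ↥(closedBall (0 : EuclideanSpace ℝ (Fin (k + 1))) 1)}
    (hz : ‖(z : EuclideanSpace ℝ (Fin (k + 1)))‖ ≤ 1 / 2) :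
    gmap φ' ψ H z =
      AttachCell.disc φ' (clamp k ((2 : ℝ) • (z : EuclideanSpace ℝ (Fin (k + 1))))) := by
  unfold gmap
  exact Set.piecewise_eq_of_mem _ _ _ hz

lemma gmap_of_not_le {z : ↥(closedBall (0 : EuclideanSpace ℝ (Fin (k + 1))) 1)}
    (hz : ¬ ‖(z : EuclideanSpace ℝ (Fin (k + 1)))‖ ≤ 1 / 2) :
    gmap φ' ψ H z = AttachCell.inl φ'
      (H (Set.projIcc (0 : ℝ) 1 zero_le_one
            (2 - 2 * ‖(z : EuclideanSpace ℝ (Fin (k + 1)))‖),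
          nrm k (z : EuclideanSpace ℝ (Fin (k + 1))))) := by
  unfold gmap
  exact Set.piecewise_eq_of_notMem _ _ _ hz

lemma gmap_sphere (z : ↥(closedBall (0 : EuclideanSpace ℝ (Fin (k + 1))) 1))
    (hz : (z : EuclideanSpace ℝ (Fin (k + 1))) ∈
      sphere (0 : EuclideanSpace ℝ (Fin (k + 1))) 1) :
    gmap φ' ψ H z = AttachCell.inl φ' (ψ ⟨z, hz⟩) := by
  have hn : ‖(z : EuclideanSpace ℝ (Fin (k + 1)))‖ = 1 := mem_sphere_zero_iff_norm.mp hz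
  rw [gmap_of_not_le φ' ψ H (by rw [hn]; norm_num)]
  have h0 : 2 - 2 * ‖(z : EuclideanSpace ℝ (Fin (k + 1)))‖ = 0 := by rw [hn]; ring
  have ht : Set.projIcc (0 : ℝ) 1 zero_le_one
      (2 - 2 * ‖(z : EuclideanSpace ℝ (Fin (k + 1)))‖) = 0 := by
    rw [h0]
    exact Subtype.ext (by simp [Set.projIcc])
  rw [ht, nrm_sphere ⟨(z : EuclideanSpace ℝ (Fin (k + 1))), hz⟩]
  rw [H.apply_zero]

set_option maxHeartbeats 1000000 in
lemma gmap_half_eq (z : ↥(closedBall (0 : EuclideanSpace ℝ (Fin (k + 1))) 1))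
    (hz : ‖(z : EuclideanSpace ℝ (Fin (k + 1)))‖ = 1 / 2) :
    AttachCell.disc φ' (clamp k ((2 : ℝ) • (z : EuclideanSpace ℝ (Fin (k + 1))))) =
      AttachCell.inl φ'
        (H (Set.projIcc (0 : ℝ) 1 zero_le_one
              (2 - 2 * ‖(z : EuclideanSpace ℝ (Fin (k + 1)))‖),
            nrm k (z : EuclideanSpace ℝ (Fin (k + 1))))) := by
  have h2x : ‖(2 : ℝ) • (z : EuclideanSpace ℝ (Fin (k + 1)))‖ = 1 := by
    rw [norm_smul, Real.norm_eq_abs, hz]; norm_num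
  have hsph : (2 : ℝ) • (z : EuclideanSpace ℝ (Fin (k + 1))) ∈
      sphere (0 : EuclideanSpace ℝ (Fin (k + 1))) 1 :=
    mem_sphere_zero_iff_norm.mpr h2x
  have hcl : clamp k ((2 : ℝ) • (z : EuclideanSpace ℝ (Fin (k + 1)))) =
      ⟨(2 : ℝ) • (z : EuclideanSpace ℝ (Fin (k + 1))), by
      rw [mem_closedBall, dist_zero_right, h2x]⟩ :=
    Subtype.ext (clamp_coe (le_of_eq h2x))
  rw [hcl, disc_sphere φ' ⟨(2 : ℝ) • (z : EuclideanSpace ℝ (Fin (k + 1))), by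
    rw [mem_closedBall, dist_zero_right, h2x]⟩ hsph]
  have h1 : 2 - 2 * ‖(z : EuclideanSpace ℝ (Fin (k + 1)))‖ = 1 := by rw [hz]; ring
  have ht : Set.projIcc (0 : ℝ) 1 zero_le_one
      (2 - 2 * ‖(z : EuclideanSpace ℝ (Fin (k + 1)))‖) = 1 := by
    rw [h1]
    exact Subtype.ext (by simp [Set.projIcc])
  rw [ht, H.apply_one]
  have hx0 : (z : EuclideanSpace ℝ (Fin (k + 1))) ≠ 0 := by
    intro h0; rw [h0, norm_zero] at hz; norm_num at hz
  congr 1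
  refine congrArg φ' (Subtype.ext ?_)
  show (2 : ℝ) • (z : EuclideanSpace ℝ (Fin (k + 1))) =
    ((nrm k (z : EuclideanSpace ℝ (Fin (k + 1)))) : EuclideanSpace ℝ (Fin (k + 1)))
  rw [nrm_coe hx0, hz, show ((1 : ℝ) / 2)⁻¹ = (2 : ℝ) by norm_num]

lemma gmap_continuous : Continuous (gmap φ' ψ H) := by
  classical
  have h2 : Continuous (fun z : ↥(closedBall (0 : EuclideanSpace ℝ (Fin (k + 1))) 1) =>
      AttachCell.disc φ' (clamp k ((2 : ℝ) • (z : EuclideanSpace ℝ (Fin (k + 1)))))) :=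
    (disc_continuous φ').comp
      ((clamp_continuous k).comp (Continuous.smul (f := fun _ => (2 : ℝ)) continuous_const continuous_subtype_val))
  have h3 : ContinuousOn (fun z : ↥(closedBall (0 : EuclideanSpace ℝ (Fin (k + 1))) 1) =>
      AttachCell.inl φ'
        (H (Set.projIcc (0 : ℝ) 1 zero_le_one
              (2 - 2 * ‖(z : EuclideanSpace ℝ (Fin (k + 1)))‖),
            nrm k (z : EuclideanSpace ℝ (Fin (k + 1))))))
      {z : ↥(closedBall (0 : EuclideanSpace ℝ (Fin (k + 1))) 1) |
        (z : EuclideanSpace ℝ (Fin (k + 1))) ≠ 0} := by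
    apply Continuous.comp_continuousOn (AttachCell.inl φ').continuous
    apply Continuous.comp_continuousOn H.continuous
    apply ContinuousOn.prodMk
    · apply Continuous.continuousOn
      exact continuous_projIcc.comp
        (continuous_const.sub (continuous_const.mul
          (continuous_norm.comp continuous_subtype_val)))
    · exact (nrm_continuousOn k).comp continuous_subtype_val.continuousOn
        (fun z hz => hz)
  have hclosed : IsClosed {z : ↥(closedBall (0 : EuclideanSpace ℝ (Fin (k + 1))) 1) |
      ‖(z : EuclideanSpace ℝ (Fin (k + 1)))‖ ≤ 1 / 2} :=
    isClosed_le (continuous_norm.comp continuous_subtype_val) continuous_const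
  have hcompl : closure {z : ↥(closedBall (0 : EuclideanSpace ℝ (Fin (k + 1))) 1) |
      ‖(z : EuclideanSpace ℝ (Fin (k + 1)))‖ ≤ 1 / 2}ᶜ ⊆
      {z : ↥(closedBall (0 : EuclideanSpace ℝ (Fin (k + 1))) 1) |
        1 / 2 ≤ ‖(z : EuclideanSpace ℝ (Fin (k + 1)))‖} := by
    apply closure_minimal
    · intro z hz
      simp only [Set.mem_compl_iff, Set.mem_setOf_eq, not_le] at hz
      exact le_of_lt hz
    · exact isClosed_le continuous_const (continuous_norm.comp continuous_subtype_val)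
  rw [← continuousOn_univ]
  unfold gmap
  apply ContinuousOn.piecewise
  · rintro a ⟨-, ha⟩
    have h1 : ‖(a : EuclideanSpace ℝ (Fin (k + 1)))‖ = 1 / 2 := by
      rw [frontier_eq_closure_inter_closure, hclosed.closure_eq] at ha
      exact le_antisymm ha.1 (hcompl ha.2)
    exact gmap_half_eq φ' ψ H a h1
  · exact h2.continuousOn.mono (Set.inter_subset_left)
  · apply h3.mono
    intro z hz
    have := hcompl hz.2
    intro h0
    rw [Set.mem_setOf_eq, h0, norm_zero] at this
    norm_num at this

end gmap

end BCEAux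

/-- Let `f₀ : X → Y` be a bijective cellular map between `k`-dimensional
CW complexes and let `φ : ∂D^{k+1} → X`, `φ' : ∂D^{k+1} → Y` be attaching maps with
`f₀ ∘ φ` homotopic to `φ'`.  Then `f₀` extends to a bijective cellular map
`f : X ∪_φ D^{k+1} → Y ∪_{φ'} D^{k+1}` (with respect to the induced CW structures on the
adjunction spaces). -/
theorem bijective_cellular_extends_over_attached_cell
    {X Y : Type} [TopologicalSpace X] [TopologicalSpace Y] (k : ℕ)
    (cwX : CWStructure X) (cwY : CWStructure Y)
    (hX : ∀ j : ℕ, k < j → IsEmpty (cwX.cells j))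
    (hY : ∀ j : ℕ, k < j → IsEmpty (cwY.cells j))
    (f₀ : C(X, Y)) (bc : BijectiveCellular cwX cwY f₀)
    (φ : C(↥(Metric.sphere (0 : EuclideanSpace ℝ (Fin (k + 1))) 1), X))
    (φ' : C(↥(Metric.sphere (0 : EuclideanSpace ℝ (Fin (k + 1))) 1), Y))
    (hφ : (f₀.comp φ).Homotopic φ')
    (cwA : CWStructure (AttachCell φ)) (cwA' : CWStructure (AttachCell φ'))
    (hA : IsAttachCWStructure cwX φ cwA) (hA' : IsAttachCWStructure cwY φ' cwA') :
    ∃ f : C(AttachCell φ, AttachCell φ'),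
      (∀ x : X, f (AttachCell.inl φ x) = AttachCell.inl φ' (f₀ x)) ∧
      Nonempty (BijectiveCellular cwA cwA' f) := by
    classical
  obtain ⟨H⟩ := hφ
  obtain ⟨ι, ιinj, ιchar, ιsurj, e₀, -, he₀all, e₀char⟩ := hA
  obtain ⟨ι', ιinj', ιchar', ιsurj', e₀', -, he₀all', e₀char'⟩ := hA'
  set g : ↥(Metric.closedBall (0 : EuclideanSpace ℝ (Fin (k + 1))) 1) → AttachCell φ' :=
    BCEAux.gmap φ' (f₀.comp φ) H with hgdef
  have key : ∀ (z : ↥(Metric.closedBall (0 : EuclideanSpace ℝ (Fin (k + 1))) 1))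
      (hz : (z : EuclideanSpace ℝ (Fin (k + 1))) ∈
        Metric.sphere (0 : EuclideanSpace ℝ (Fin (k + 1))) 1),
      g z = AttachCell.inl φ' (f₀ (φ ⟨z, hz⟩)) := by
    intro z hz
    rw [hgdef, BCEAux.gmap_sphere φ' (f₀.comp φ) H z hz]
    rfl
  have hsound : ∀ a b, (attachSetoid φ).r a b →
      Sum.elim (fun x => AttachCell.inl φ' (f₀ x)) g a =
      Sum.elim (fun x => AttachCell.inl φ' (f₀ x)) g b := by
    rintro (x | z) (x' | z') h
    · have h' : Sum.inl x = Sum.inl x' := h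
      obtain rfl := Sum.inl.inj h'
      rfl
    · have h' : attachRepr φ (Sum.inl x) = attachRepr φ (Sum.inr z') := h
      simp only [attachRepr] at h'
      by_cases hz : (z' : EuclideanSpace ℝ (Fin (k + 1))) ∈
          Metric.sphere (0 : EuclideanSpace ℝ (Fin (k + 1))) 1
      · rw [dif_pos hz] at h'
        obtain rfl := Sum.inl.inj h'
        simp only [Sum.elim_inl, Sum.elim_inr]
        rw [key z' hz]
      · rw [dif_neg hz] at h'
        exact absurd h' (by simp)
    · have h' : attachRepr φ (Sum.inr z) = attachRepr φ (Sum.inl x') := h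
      simp only [attachRepr] at h'
      by_cases hz : (z : EuclideanSpace ℝ (Fin (k + 1))) ∈
          Metric.sphere (0 : EuclideanSpace ℝ (Fin (k + 1))) 1
      · rw [dif_pos hz] at h'
        obtain rfl := Sum.inl.inj h'
        simp only [Sum.elim_inl, Sum.elim_inr]
        rw [key z hz]
      · rw [dif_neg hz] at h'
        exact absurd h' (by simp)
    · have h' : attachRepr φ (Sum.inr z) = attachRepr φ (Sum.inr z') := h
      simp only [attachRepr] at h'
      by_cases hz : (z : EuclideanSpace ℝ (Fin (k + 1))) ∈
          Metric.sphere (0 : EuclideanSpace ℝ (Fin (k + 1))) 1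
      · by_cases hz' : (z' : EuclideanSpace ℝ (Fin (k + 1))) ∈
            Metric.sphere (0 : EuclideanSpace ℝ (Fin (k + 1))) 1
        · rw [dif_pos hz, dif_pos hz'] at h'
          simp only [Sum.elim_inr]
          rw [key z hz, key z' hz', Sum.inl.inj h']
        · rw [dif_pos hz, dif_neg hz'] at h'
          exact absurd h' (by simp)
      · by_cases hz' : (z' : EuclideanSpace ℝ (Fin (k + 1))) ∈
            Metric.sphere (0 : EuclideanSpace ℝ (Fin (k + 1))) 1
        · rw [dif_neg hz, dif_pos hz'] at h'
          exact absurd h' (by simp)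
        · rw [dif_neg hz, dif_neg hz'] at h'
          obtain rfl := Sum.inr.inj h'
          rfl
  set F : C(AttachCell φ, AttachCell φ') :=
    ⟨Quotient.lift (Sum.elim (fun x => AttachCell.inl φ' (f₀ x)) g) hsound,
      Continuous.quotient_lift (Continuous.sumElim
        ((AttachCell.inl φ').continuous.comp f₀.continuous)
        (BCEAux.gmap_continuous φ' (f₀.comp φ) H)) hsound⟩ with hFdef
  have hFinl : ∀ x : X, F (AttachCell.inl φ x) = AttachCell.inl φ' (f₀ x) := fun _ => rfl
  have hFdisc : ∀ z, F (AttachCell.disc φ z) = g z := fun _ => rfl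
  -- all (k+1)-cells coincide with the new one
  have hallA : ∀ e' : cwA.cells (k + 1), e' = e₀ := by
    intro e'
    rcases he₀all e' with h | ⟨e, -⟩
    · exact h
    · exact ((hX (k + 1) (Nat.lt_succ_self k)).false e).elim
  have hallA' : ∀ e' : cwA'.cells (k + 1), e' = e₀' := by
    intro e'
    rcases he₀all' e' with h | ⟨e, -⟩
    · exact h
    · exact ((hY (k + 1) (Nat.lt_succ_self k)).false e).elim
  set βeq : ∀ n : ℕ, cwA.cells n ≃ cwA'.cells n := fun n =>
    if h : n = k + 1 then
      (by subst h; exact ⟨fun _ => e₀', fun _ => e₀,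
        fun a => (hallA a).symm, fun a => (hallA' a).symm⟩)
    else
      (Equiv.ofBijective (ι n) ⟨ιinj n, ιsurj n h⟩).symm.trans
        ((bc.β n).trans (Equiv.ofBijective (ι' n) ⟨ιinj' n, ιsurj' n h⟩))
    with hβdef
  have hβtop : ∀ e : cwA.cells (k + 1), βeq (k + 1) e = e₀' := by
    intro e
    simp only [hβdef]
    split
    · rfl
    · exact (‹¬True› trivial).elim
  have hβι : ∀ (n : ℕ) (hn : n ≠ k + 1) (ex : cwX.cells n),
      βeq n (ι n ex) = ι' n (bc.β n ex) := by
    intro n hn ex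
    simp only [hβdef]
    rw [dif_neg hn]
    simp only [Equiv.trans_apply]
    rw [show (Equiv.ofBijective (ι n) ⟨ιinj n, ιsurj n hn⟩).symm (ι n ex) = ex from
      Equiv.ofBijective_symm_apply_apply _ _ ex]
    rfl
  have hYskel : ∀ (y : Y) (n : ℕ), k ≤ n → y ∈ cwY.skeleton n := by
    intro y n hn
    obtain ⟨p, hp, -⟩ := cwY.cover y
    obtain ⟨w, hw, hwe⟩ := hp
    have hpk : p.1 ≤ n := by
      by_contra hc
      push_neg at hc
      exact (hY p.1 (lt_of_le_of_lt hn hc)).false p.2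
    rw [← hwe]
    exact BCEAux.mem_skeleton cwY hpk p.2 (Metric.ball_subset_closedBall hw)
  have hinlskel : ∀ (n : ℕ) (y : Y), y ∈ cwY.skeleton n →
      AttachCell.inl φ' y ∈ cwA'.skeleton n := by
    intro n y hy
    simp only [CWStructure.skeleton, Set.mem_iUnion, Set.mem_image] at hy
    obtain ⟨m, hm, e, w, hw, hwe⟩ := hy
    rw [← hwe, ← ιchar' m e w]
    exact BCEAux.mem_skeleton cwA' hm (ι' m e) hw
  have hcell : IsCellular cwA cwA' F := by
    intro n x hx
    simp only [CWStructure.skeleton, Set.mem_iUnion, Set.mem_image] at hx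
    obtain ⟨m, hm, e, z, hz, hze⟩ := hx
    by_cases hmk : m = k + 1
    · subst hmk
      obtain rfl : e = e₀ := hallA e
      rw [← hze, e₀char z hz, hFdisc ⟨z, hz⟩]
      by_cases hhalf : ‖z‖ ≤ 1 / 2
      · rw [hgdef, BCEAux.gmap_of_le φ' (f₀.comp φ) H (by exact hhalf)]
        have h2z : ‖(2 : ℝ) • z‖ ≤ 1 := by
          rw [norm_smul, Real.norm_eq_abs, abs_two]
          linarith
        have hmem2 : (2 : ℝ) • z ∈
            Metric.closedBall (0 : EuclideanSpace ℝ (Fin (k + 1))) 1 := by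
          rw [Metric.mem_closedBall, dist_zero_right]; exact h2z
        rw [show BCEAux.clamp k ((2 : ℝ) • z) = ⟨(2 : ℝ) • z, hmem2⟩ from
          Subtype.ext (BCEAux.clamp_coe h2z)]
        rw [← e₀char' ((2 : ℝ) • z) hmem2]
        exact BCEAux.mem_skeleton cwA' hm e₀' hmem2
      · rw [hgdef, BCEAux.gmap_of_not_le φ' (f₀.comp φ) H (by exact hhalf)]
        exact hinlskel n _ (hYskel _ n (le_trans (Nat.le_succ k) hm))
    · obtain ⟨ex, rfl⟩ := ιsurj m hmk e
      rw [← hze, ιchar m ex z, hFinl]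
      have h1 : cwX.charMap ex z ∈ cwX.skeleton m := BCEAux.mem_skeleton cwX le_rfl ex hz
      have h2 := bc.cellular m h1
      exact hinlskel n _ (BCEAux.skeleton_mono cwY hm h2)
  have hball : ∀ (n : ℕ) (e : cwA.cells n),
      ∃ (c : EuclideanSpace ℝ (Fin n)) (r : ℝ), 0 < r ∧
        Metric.closedBall c r ⊆ Metric.ball (0 : EuclideanSpace ℝ (Fin n)) 1 ∧
        Set.BijOn (F ∘ cwA.charMap e) (Metric.ball c r) (cwA'.openCell (βeq n e)) := by
    intro n e
    by_cases hnk : n = k + 1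
    · subst hnk
      rw [hallA e, hβtop e₀]
      have hval : ∀ z : EuclideanSpace ℝ (Fin (k + 1)), ‖z‖ < 1 / 2 →
          (F ∘ cwA.charMap e₀) z = cwA'.charMap e₀' ((2 : ℝ) • z) := by
        intro z hz
        have hz1 : z ∈ Metric.closedBall (0 : EuclideanSpace ℝ (Fin (k + 1))) 1 := by
          rw [Metric.mem_closedBall, dist_zero_right]; linarith
        have h2z : ‖(2 : ℝ) • z‖ ≤ 1 := by
          rw [norm_smul, Real.norm_eq_abs, abs_two]; linarith
        have hmem2 : (2 : ℝ) • z ∈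
            Metric.closedBall (0 : EuclideanSpace ℝ (Fin (k + 1))) 1 := by
          rw [Metric.mem_closedBall, dist_zero_right]; exact h2z
        rw [Function.comp_apply, e₀char z hz1, hFdisc ⟨z, hz1⟩, hgdef,
          BCEAux.gmap_of_le φ' (f₀.comp φ) H (by exact le_of_lt hz)]
        rw [show BCEAux.clamp k ((2 : ℝ) • z) = ⟨(2 : ℝ) • z, hmem2⟩ from
          Subtype.ext (BCEAux.clamp_coe h2z)]
        exact (e₀char' ((2 : ℝ) • z) hmem2).symm
      refine ⟨0, 1 / 2, by norm_num, Metric.closedBall_subset_ball (by norm_num),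
        ?_, ?_, ?_⟩
      · intro z hz
        rw [Metric.mem_ball, dist_zero_right] at hz
        rw [hval z hz]
        exact ⟨(2 : ℝ) • z, by
          rw [Metric.mem_ball, dist_zero_right, norm_smul, Real.norm_eq_abs, abs_two]
          linarith, rfl⟩
      · intro z₁ h₁ z₂ h₂ heq
        rw [Metric.mem_ball, dist_zero_right] at h₁ h₂
        rw [hval z₁ h₁, hval z₂ h₂] at heq
        have hm₁ : (2 : ℝ) • z₁ ∈
            Metric.closedBall (0 : EuclideanSpace ℝ (Fin (k + 1))) 1 := by
          rw [Metric.mem_closedBall, dist_zero_right, norm_smul, Real.norm_eq_abs, abs_two]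
          linarith
        have hm₂ : (2 : ℝ) • z₂ ∈
            Metric.closedBall (0 : EuclideanSpace ℝ (Fin (k + 1))) 1 := by
          rw [Metric.mem_closedBall, dist_zero_right, norm_smul, Real.norm_eq_abs, abs_two]
          linarith
        rw [e₀char' _ hm₁, e₀char' _ hm₂] at heq
        have hs₁ : ((⟨(2 : ℝ) • z₁, hm₁⟩ :
            ↥(Metric.closedBall (0 : EuclideanSpace ℝ (Fin (k + 1))) 1)) :
            EuclideanSpace ℝ (Fin (k + 1))) ∉
            Metric.sphere (0 : EuclideanSpace ℝ (Fin (k + 1))) 1 := by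
          rw [mem_sphere_zero_iff_norm, norm_smul, Real.norm_eq_abs, abs_two]
          intro hc; linarith
        have hs₂ : ((⟨(2 : ℝ) • z₂, hm₂⟩ :
            ↥(Metric.closedBall (0 : EuclideanSpace ℝ (Fin (k + 1))) 1)) :
            EuclideanSpace ℝ (Fin (k + 1))) ∉
            Metric.sphere (0 : EuclideanSpace ℝ (Fin (k + 1))) 1 := by
          rw [mem_sphere_zero_iff_norm, norm_smul, Real.norm_eq_abs, abs_two]
          intro hc; linarith
        have := BCEAux.disc_inj_off_sphere φ' _ _ hs₁ hs₂ heq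
        have hval2 : (2 : ℝ) • z₁ = (2 : ℝ) • z₂ := congrArg Subtype.val this
        exact smul_right_injective _ (two_ne_zero) hval2
      · intro y hy
        simp only [CWStructure.openCell, Set.mem_image] at hy
        obtain ⟨w, hw, rfl⟩ := hy
        rw [Metric.mem_ball, dist_zero_right] at hw
        refine ⟨(2 : ℝ)⁻¹ • w, ?_, ?_⟩
        · rw [Metric.mem_ball, dist_zero_right, norm_smul, Real.norm_eq_abs]
          rw [abs_of_pos (by norm_num : (0:ℝ) < 2⁻¹)]
          linarith
        · have hn : ‖(2 : ℝ)⁻¹ • w‖ < 1 / 2 := by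
            rw [norm_smul, Real.norm_eq_abs, abs_of_pos (by norm_num : (0:ℝ) < 2⁻¹)]
            linarith
          rw [hval _ hn, smul_smul, show (2 : ℝ) * 2⁻¹ = 1 by norm_num, one_smul]
    · obtain ⟨ex, rfl⟩ := ιsurj n hnk e
      obtain ⟨c, r, hr, hsub, hbij⟩ := bc.exists_ball n ex
      refine ⟨c, r, hr, hsub, ?_⟩
      rw [hβι n hnk ex]
      have hfun : (F ∘ ⇑(cwA.charMap (ι n ex))) =
          (AttachCell.inl φ') ∘ (⇑f₀ ∘ ⇑(cwX.charMap ex)) := by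
        funext w
        simp only [Function.comp_apply, ιchar n ex w]
        exact hFinl _
      rw [hfun]
      have hoc : cwA'.openCell (ι' n (bc.β n ex)) =
          AttachCell.inl φ' '' cwY.openCell (bc.β n ex) := by
        unfold CWStructure.openCell
        rw [show ⇑(cwA'.charMap (ι' n (bc.β n ex))) =
          (AttachCell.inl φ') ∘ ⇑(cwY.charMap (bc.β n ex)) from
          funext fun w => ιchar' n (bc.β n ex) w, Set.image_comp]
      rw [hoc]
      exact (Set.InjOn.bijOn_image (BCEAux.inl_injective φ').injOn).comp hbij
  exact ⟨F, hFinl, ⟨⟨hcell, βeq, hball⟩⟩⟩
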